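/- arXiv:1507.02199 — 2 statements merged into one kernel-verified Lean document; each statement's English description precedes it below -/
import Mathlib

section
/- Every multigraph G with maximum degree Δ admits a proper edge coloring using at most ⌈(3/2)·Δ⌉ colors. Consequently, the edge set of any graph can be partitioned into at most ⌈(3/2)·Δ⌉ matchings. -/
open Finset

namespace ShannonAux

variable {V E : Type*} [Fintype E] [DecidableEq E]

open scoped Classical
set_option linter.unusedSectionVars false
set_option maxHeartbeats 1000000

def ProperOn (ends : E → Sym2 V) {k : ℕ} (s : Finset E) (c : E → Fin k) : Prop :=
  ∀ e₁ ∈ s, ∀ e₂ ∈ s, e₁ ≠ e₂ → (∃ x, x ∈ ends e₁ ∧ x ∈ ends e₂) → c e₁ ≠ c e₂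

def freeAt (ends : E → Sym2 V) {k : ℕ} (s : Finset E) (c : E → Fin k) (x : V) (γ : Fin k) : Prop :=
  ∀ e ∈ s, x ∈ ends e → c e ≠ γ

lemma sym2_cases (z : Sym2 V) : ∃ x y, z = s(x, y) :=
  Sym2.ind (fun x y => ⟨x, y, rfl⟩) z

lemma deg_color_le (ends : E → Sym2 V) {k : ℕ} {s : Finset E} {c : E → Fin k}
    (hc : ProperOn ends s c) (x : V) (t : Finset (Fin k)) :
    ((s.filter (fun e => x ∈ ends e)).filter (fun e => c e ∈ t)).card ≤ t.card := by
  apply Finset.card_le_card_of_injOn c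
  · intro e he
    simp only [Finset.mem_coe, Finset.mem_filter] at he
    exact he.2
  · intro e₁ h₁ e₂ h₂ hcc
    simp only [Finset.coe_filter, Set.mem_setOf_eq, Finset.mem_filter] at h₁ h₂
    by_contra hne
    exact hc e₁ h₁.1.1 e₂ h₂.1.1 hne ⟨x, h₁.1.2, h₂.1.2⟩ hcc

noncomputable def missing (ends : E → Sym2 V) {k : ℕ} (s : Finset E) (c : E → Fin k) (x : V) :
    Finset (Fin k) := univ.filter (fun γ => freeAt ends s c x γ)

lemma mem_missing {ends : E → Sym2 V} {k : ℕ} {s : Finset E} {c : E → Fin k} {x : V}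
    {γ : Fin k} : γ ∈ missing ends s c x ↔ freeAt ends s c x γ := by
  simp [missing]

lemma missing_card_ge (ends : E → Sym2 V) {k : ℕ} (s : Finset E) (c : E → Fin k) (x : V) :
    k - (s.filter (fun e => x ∈ ends e)).card ≤ (missing ends s c x).card := by
  have h1 : (univ : Finset (Fin k)) \ ((s.filter (fun e => x ∈ ends e)).image c)
      ⊆ missing ends s c x := by
    intro γ hγ
    rw [Finset.mem_sdiff] at hγ
    rw [mem_missing]
    intro e he hxe hce
    exact hγ.2 (Finset.mem_image.mpr ⟨e, Finset.mem_filter.mpr ⟨he, hxe⟩, hce⟩)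
  calc k - (s.filter (fun e => x ∈ ends e)).card
      ≤ k - ((s.filter (fun e => x ∈ ends e)).image c).card := by
        have := Finset.card_image_le (s := s.filter (fun e => x ∈ ends e)) (f := c)
        omega
    _ = ((univ : Finset (Fin k)) \ ((s.filter (fun e => x ∈ ends e)).image c)).card := by
        rw [Finset.card_sdiff_of_subset (Finset.subset_univ _), Finset.card_univ, Fintype.card_fin]
    _ ≤ _ := Finset.card_le_card h1

lemma properOn_update_insert (ends : E → Sym2 V) {k : ℕ} {s : Finset E} {c : E → Fin k}
    (hc : ProperOn ends s c) {e : E} (he : e ∉ s) {γ : Fin k}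
    (hγ : ∀ x, x ∈ ends e → freeAt ends s c x γ) :
    ProperOn ends (insert e s) (Function.update c e γ) := by
  intro e₁ h₁ e₂ h₂ hne hadj
  rw [Finset.mem_insert] at h₁ h₂
  rcases h₁ with rfl | h₁
  · rcases h₂ with rfl | h₂
    · exact absurd rfl hne
    · obtain ⟨x, hx1, hx2⟩ := hadj
      rw [Function.update_self, Function.update_of_ne (show e₂ ≠ e₁ from fun h => he (h ▸ h₂))]
      exact fun h => hγ x hx1 e₂ h₂ hx2 h.symm
  · rcases h₂ with rfl | h₂
    · obtain ⟨x, hx1, hx2⟩ := hadj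
      rw [Function.update_self, Function.update_of_ne (show e₁ ≠ e₂ from fun h => he (h ▸ h₁))]
      exact hγ x hx2 e₁ h₁ hx1
    · rw [Function.update_of_ne (show e₁ ≠ e from fun h => he (h ▸ h₁)),
        Function.update_of_ne (show e₂ ≠ e from fun h => he (h ▸ h₂))]
      exact hc e₁ h₁ e₂ h₂ hne hadj

/-- recoloring an existing edge with a color free at both its endpoints -/
lemma properOn_update (ends : E → Sym2 V) {k : ℕ} {s : Finset E} {c : E → Fin k}
    (hc : ProperOn ends s c) {f : E} {γ : Fin k}
    (hγ : ∀ x, x ∈ ends f → ∀ e ∈ s, e ≠ f → x ∈ ends e → c e ≠ γ) :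
    ProperOn ends s (Function.update c f γ) := by
  intro e₁ h₁ e₂ h₂ hne hadj
  by_cases hf1 : e₁ = f
  · subst hf1
    have hf2 : e₂ ≠ e₁ := hne.symm
    rw [Function.update_self, Function.update_of_ne hf2]
    obtain ⟨x, hx1, hx2⟩ := hadj
    exact fun h => hγ x hx1 e₂ h₂ hf2 hx2 h.symm
  · by_cases hf2 : e₂ = f
    · subst hf2
      rw [Function.update_self, Function.update_of_ne hf1]
      obtain ⟨x, hx1, hx2⟩ := hadj
      exact hγ x hx2 e₁ h₁ hf1 hx1
    · rw [Function.update_of_ne hf1, Function.update_of_ne hf2]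
      exact hc e₁ h₁ e₂ h₂ hne hadj

def chainRel (ends : E → Sym2 V) {k : ℕ} (s : Finset E) (c : E → Fin k) (a b : Fin k)
    (x y : V) : Prop :=
  ∃ e ∈ s, (c e = a ∨ c e = b) ∧ ends e = s(x, y)

def walkN (ends : E → Sym2 V) {k : ℕ} (s : Finset E) (c : E → Fin k) (a b : Fin k) (u : V) :
    ℕ → V → Prop
  | 0, x => x = u
  | n+1, x => ∃ y, walkN ends s c a b u n y ∧ chainRel ends s c a b y x

lemma swap_main (ends : E → Sym2 V) (hloopless : ∀ e : E, ¬ (ends e).IsDiag)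
    {k : ℕ} {s : Finset E} {c : E → Fin k}
    (hc : ProperOn ends s c) {a b : Fin k} (hab : a ≠ b) {u : V}
    (hua : freeAt ends s c u a) :
    ∃ (T : Set V) (c' : E → Fin k),
      u ∈ T ∧
      ProperOn ends s c' ∧
      freeAt ends s c' u b ∧
      (∀ x ∉ T, ∀ γ, (freeAt ends s c' x γ ↔ freeAt ends s c x γ)) ∧
      (∀ x γ, γ ≠ a → γ ≠ b → (freeAt ends s c' x γ ↔ freeAt ends s c x γ)) ∧
      (∀ e ∈ s, c e ≠ a → c e ≠ b → c' e = c e) ∧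
      (∀ v w : V, v ∈ T → w ∈ T → v ≠ u → w ≠ u → v ≠ w →
        (freeAt ends s c v a ∨ freeAt ends s c v b) →
        (freeAt ends s c w a ∨ freeAt ends s c w b) → False) := by
  set T : Set V := {x | ∃ n, walkN ends s c a b u n x} with hT
  have huT : u ∈ T := ⟨0, rfl⟩
  have hTclosed : ∀ x ∈ T, ∀ y, chainRel ends s c a b x y → y ∈ T := by
    rintro x ⟨n, hn⟩ y hxy
    exact ⟨n + 1, x, hn, hxy⟩
  set R : Finset E :=
    s.filter (fun e => (c e = a ∨ c e = b) ∧ ∃ x, x ∈ ends e ∧ x ∈ T) with hR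
  have hRs : ∀ e ∈ R, e ∈ s := fun e he => (Finset.mem_filter.mp he).1
  have hRab : ∀ e ∈ R, c e = a ∨ c e = b := fun e he => (Finset.mem_filter.mp he).2.1
  -- both endpoints of an R-edge lie in T
  have hRend : ∀ e ∈ R, ∀ x, x ∈ ends e → x ∈ T := by
    intro e he x hx
    obtain ⟨x₀, hx₀e, hx₀T⟩ := (Finset.mem_filter.mp he).2.2
    by_cases hxx : x = x₀
    · exact hxx ▸ hx₀T
    · have hends : ends e = s(x₀, x) :=
        ((Sym2.mem_and_mem_iff (Ne.symm hxx)).mp ⟨hx₀e, hx⟩)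
      exact hTclosed x₀ hx₀T x ⟨e, hRs e he, hRab e he, hends⟩
  -- closure: an (a|b)-edge sharing a vertex with an R-edge is in R
  have hRclosure : ∀ e ∈ R, ∀ x, x ∈ ends e → ∀ e' ∈ s, x ∈ ends e' →
      (c e' = a ∨ c e' = b) → e' ∈ R := by
    intro e he x hx e' he' hx' hab'
    exact Finset.mem_filter.mpr ⟨he', hab', x, hx', hRend e he x hx⟩
  -- edges incident to u: only b-colored ones are in R, and u's incident R-edges exist iff b-edge
  have huRa : ∀ e ∈ s, u ∈ ends e → c e ≠ a := fun e he hu => hua e he hu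
  set c' : E → Fin k := fun e => if e ∈ R then Equiv.swap a b (c e) else c e with hc'
  have hc'mem : ∀ e ∈ R, c' e = Equiv.swap a b (c e) := by
    intro e he; simp only [hc', if_pos he]
  have hc'nmem : ∀ e, e ∉ R → c' e = c e := by
    intro e he; simp only [hc', if_neg he]
  refine ⟨T, c', huT, ?_, ?_, ?_, ?_, ?_, ?_⟩
  · -- properness
    intro e₁ h₁ e₂ h₂ hne hadj
    obtain ⟨x, hx1, hx2⟩ := hadj
    by_cases hR1 : e₁ ∈ R
    · by_cases hR2 : e₂ ∈ R
      · rw [hc'mem e₁ hR1, hc'mem e₂ hR2]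
        exact fun h => hc e₁ h₁ e₂ h₂ hne ⟨x, hx1, hx2⟩ ((Equiv.swap a b).injective h)
      · have hab2 : ¬(c e₂ = a ∨ c e₂ = b) := fun h => hR2 (hRclosure e₁ hR1 x hx1 e₂ h₂ hx2 h)
        rw [hc'mem e₁ hR1, hc'nmem e₂ hR2]
        rcases hRab e₁ hR1 with h | h <;> rw [h] <;>
          simp only [Equiv.swap_apply_left, Equiv.swap_apply_right] <;> tauto
    · by_cases hR2 : e₂ ∈ R
      · have hab1 : ¬(c e₁ = a ∨ c e₁ = b) := fun h => hR1 (hRclosure e₂ hR2 x hx2 e₁ h₁ hx1 h)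
        rw [hc'nmem e₁ hR1, hc'mem e₂ hR2]
        rcases hRab e₂ hR2 with h | h <;> rw [h] <;>
          simp only [Equiv.swap_apply_left, Equiv.swap_apply_right] <;> tauto
      · rw [hc'nmem e₁ hR1, hc'nmem e₂ hR2]
        exact hc e₁ h₁ e₂ h₂ hne ⟨x, hx1, hx2⟩
  · -- b is free at u afterwards
    intro e he hu hbe
    by_cases hRe : e ∈ R
    · rw [hc'mem e hRe] at hbe
      rcases hRab e hRe with h | h
      · exact huRa e he hu h
      · rw [h, Equiv.swap_apply_right] at hbe; exact hab hbe
    · rw [hc'nmem e hRe] at hbe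
      exact hRe (Finset.mem_filter.mpr ⟨he, Or.inr hbe, u, hu, huT⟩)
  · -- untouched vertices keep their free colors
    intro x hx γ
    have : ∀ e ∈ s, x ∈ ends e → c' e = c e := by
      intro e he hxe
      refine hc'nmem e (fun hRe => hx (hRend e hRe x hxe))
    constructor <;> intro h e he hxe
    · exact this e he hxe ▸ h e he hxe
    · rw [this e he hxe]; exact h e he hxe
  · -- colors other than a,b are unaffected everywhere
    intro x γ hga hgb
    have : ∀ e ∈ s, x ∈ ends e → (c' e = γ ↔ c e = γ) := by
      intro e he hxe
      by_cases hRe : e ∈ R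
      · rw [hc'mem e hRe]
        rcases hRab e hRe with h | h <;> rw [h] <;>
          simp only [Equiv.swap_apply_left, Equiv.swap_apply_right] <;>
          constructor <;> intro hh <;> exact absurd hh.symm (by assumption)
      · rw [hc'nmem e hRe]
    constructor <;> intro h e he hxe hce
    · exact h e he hxe ((this e he hxe).mpr hce)
    · exact h e he hxe ((this e he hxe).mp hce)
  · -- edges with other colors unchanged
    intro e he hea heb
    exact hc'nmem e (fun hRe => by rcases hRab e hRe with h | h <;> [exact hea h; exact heb h])
  · -- the three-endpoint contradiction
    intro v w hvT hwT hvu hwu hvw hvfree hwfree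
    -- T is finite
    have hTfin : T.Finite := by
      have hsub : T ⊆ insert u (⋃ e : E, {x : V | x ∈ ends e}) := by
        rintro x ⟨n, hn⟩
        cases n with
        | zero =>
          simp only [walkN] at hn
          exact hn ▸ Set.mem_insert x _
        | succ m =>
          simp only [walkN, chainRel] at hn
          obtain ⟨y, _, e, _, _, hends⟩ := hn
          refine Set.mem_insert_iff.mpr (Or.inr (Set.mem_iUnion.mpr ⟨e, ?_⟩))
          rw [hends]; exact Sym2.mem_mk_right y x
      refine Set.Finite.subset ?_ hsub
      refine (Set.finite_iUnion (fun e : E => ?_)).insert u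
      obtain ⟨p, q, hpq⟩ := sym2_cases (ends e)
      rw [hpq]
      have hset : {x : V | x ∈ s(p, q)} = {p, q} := by ext z; simp [Sym2.mem_iff]
      rw [hset]
      exact (Set.finite_singleton q).insert p
    -- distance function
    set dist : V → ℕ := fun x =>
      if h : ∃ n, walkN ends s c a b u n x then Nat.find h else 0 with hdist
    have hdist_le : ∀ x n, walkN ends s c a b u n x → dist x ≤ n := by
      intro x n hn
      simp only [hdist]
      rw [dif_pos ⟨n, hn⟩]
      exact Nat.find_le hn
    have hkey : ∀ x ∈ T, x ≠ u →
        ∃ e, e ∈ R ∧ ∃ y, ends e = s(y, x) ∧ dist y < dist x := by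
      intro x hx hxu
      have hx' : ∃ n, walkN ends s c a b u n x := hx
      have hdx : dist x = Nat.find hx' := by
        simp only [hdist]; rw [dif_pos hx']
      have hspec := Nat.find_spec hx'
      rcases hfd : Nat.find hx' with _ | m
      · rw [hfd] at hspec
        simp only [walkN] at hspec
        exact absurd hspec hxu
      · rw [hfd] at hspec
        simp only [walkN, chainRel] at hspec
        obtain ⟨y, hy, e, hes, heab, hends⟩ := hspec
        have heR : e ∈ R := Finset.mem_filter.mpr
          ⟨hes, heab, y, (hends ▸ Sym2.mem_mk_left y x), ⟨m, hy⟩⟩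
        refine ⟨e, heR, y, hends, ?_⟩
        have := hdist_le y m hy
        omega
    -- injection from Tf.erase u into R
    obtain ⟨e₀, he₀, _⟩ := hkey v hvT hvu
    set Tf : Finset V := hTfin.toFinset with hTfdef
    have hmemTf : ∀ x, x ∈ Tf ↔ x ∈ T := fun x => Set.Finite.mem_toFinset hTfin
    set g : V → E := fun x =>
      if h : ∃ e, e ∈ R ∧ ∃ y, ends e = s(y, x) ∧ dist y < dist x then h.choose else e₀
      with hg
    have hgspec : ∀ x ∈ T, x ≠ u →
        g x ∈ R ∧ ∃ y, ends (g x) = s(y, x) ∧ dist y < dist x := by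
      intro x hx hxu
      have h' : ∃ e, e ∈ R ∧ ∃ y, ends e = s(y, x) ∧ dist y < dist x := hkey x hx hxu
      simp only [hg]
      rw [dif_pos h']
      exact h'.choose_spec
    have hcard1 : (Tf.erase u).card ≤ R.card := by
      apply Finset.card_le_card_of_injOn g
      · intro x hx
        have hx' : x ∈ Tf.erase u := hx
        rw [Finset.mem_erase] at hx'
        exact (hgspec x ((hmemTf x).mp hx'.2) hx'.1).1
      · intro x₁ h₁ x₂ h₂ heq
        have h₁' : x₁ ∈ Tf.erase u := h₁
        have h₂' : x₂ ∈ Tf.erase u := h₂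
        rw [Finset.mem_erase] at h₁' h₂'
        obtain ⟨_, y₁, hy₁, hd₁⟩ := hgspec x₁ ((hmemTf x₁).mp h₁'.2) h₁'.1
        obtain ⟨_, y₂, hy₂, hd₂⟩ := hgspec x₂ ((hmemTf x₂).mp h₂'.2) h₂'.1
        have hss : s(y₁, x₁) = s(y₂, x₂) := by rw [← hy₁, heq, hy₂]
        rw [Sym2.eq_iff] at hss
        rcases hss with ⟨_, h⟩ | ⟨hA, hB⟩
        · exact h
        · subst hA; subst hB; omega
    have hcardT : Tf.card ≤ R.card + 1 := by
      have := Finset.card_erase_add_one ((hmemTf u).mpr huT)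
      omega
    -- handshake
    have hhand : ∑ e ∈ R, (Tf.filter (fun x => x ∈ ends e)).card
        = ∑ x ∈ Tf, (R.filter (fun e => x ∈ ends e)).card := by
      simp only [Finset.card_filter]
      exact Finset.sum_comm
    have hedge2 : ∀ e ∈ R, (Tf.filter (fun x => x ∈ ends e)).card = 2 := by
      intro e he
      obtain ⟨p, q, hpq⟩ := sym2_cases (ends e)
      have hpq' : p ≠ q := by
        intro h
        exact hloopless e (by rw [hpq, h]; exact Sym2.mk_isDiag_iff.mpr rfl)
      have hp : p ∈ T := hRend e he p (by rw [hpq]; exact Sym2.mem_mk_left p q)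
      have hq : q ∈ T := hRend e he q (by rw [hpq]; exact Sym2.mem_mk_right p q)
      have hfil : Tf.filter (fun x => x ∈ ends e) = {p, q} := by
        ext z
        simp only [Finset.mem_filter, hmemTf, Finset.mem_insert, Finset.mem_singleton,
          hpq, Sym2.mem_iff]
        constructor
        · rintro ⟨_, h⟩; exact h
        · rintro (rfl | rfl)
          · exact ⟨hp, Or.inl rfl⟩
          · exact ⟨hq, Or.inr rfl⟩
      rw [hfil, Finset.card_pair hpq']
    have hsum2R : ∑ x ∈ Tf, (R.filter (fun e => x ∈ ends e)).card = 2 * R.card := by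
      rw [← hhand, Finset.sum_congr rfl hedge2, Finset.sum_const, smul_eq_mul, mul_comm]
    -- degree bounds
    have hdeg2 : ∀ x : V, (R.filter (fun e => x ∈ ends e)).card ≤ 2 := by
      intro x
      have hsub : R.filter (fun e => x ∈ ends e) ⊆
          (s.filter (fun e => x ∈ ends e)).filter
            (fun e => c e ∈ ({a, b} : Finset (Fin k))) := by
        intro e he
        rw [Finset.mem_filter] at he
        rw [Finset.mem_filter, Finset.mem_filter]
        refine ⟨⟨hRs e he.1, he.2⟩, ?_⟩
        rcases hRab e he.1 with h | h <;> simp [h]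
      calc (R.filter (fun e => x ∈ ends e)).card
          ≤ _ := Finset.card_le_card hsub
        _ ≤ ({a, b} : Finset (Fin k)).card := deg_color_le ends hc x _
        _ ≤ 2 := Finset.card_insert_le a {b}
    have hdeg1 : ∀ x : V, (freeAt ends s c x a ∨ freeAt ends s c x b) →
        (R.filter (fun e => x ∈ ends e)).card ≤ 1 := by
      intro x hfree
      rcases hfree with hf | hf
      · have hsub : R.filter (fun e => x ∈ ends e) ⊆
            (s.filter (fun e => x ∈ ends e)).filter
              (fun e => c e ∈ ({b} : Finset (Fin k))) := by
          intro e he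
          rw [Finset.mem_filter] at he
          rw [Finset.mem_filter, Finset.mem_filter, Finset.mem_singleton]
          refine ⟨⟨hRs e he.1, he.2⟩, ?_⟩
          rcases hRab e he.1 with h | h
          · exact absurd h (hf e (hRs e he.1) he.2)
          · exact h
        calc (R.filter (fun e => x ∈ ends e)).card
            ≤ _ := Finset.card_le_card hsub
          _ ≤ ({b} : Finset (Fin k)).card := deg_color_le ends hc x _
          _ = 1 := Finset.card_singleton b
      · have hsub : R.filter (fun e => x ∈ ends e) ⊆
            (s.filter (fun e => x ∈ ends e)).filter
              (fun e => c e ∈ ({a} : Finset (Fin k))) := by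
          intro e he
          rw [Finset.mem_filter] at he
          rw [Finset.mem_filter, Finset.mem_filter, Finset.mem_singleton]
          refine ⟨⟨hRs e he.1, he.2⟩, ?_⟩
          rcases hRab e he.1 with h | h
          · exact h
          · exact absurd h (hf e (hRs e he.1) he.2)
        calc (R.filter (fun e => x ∈ ends e)).card
            ≤ _ := Finset.card_le_card hsub
          _ ≤ ({a} : Finset (Fin k)).card := deg_color_le ends hc x _
          _ = 1 := Finset.card_singleton a
    -- final arithmetic
    set S3 : Finset V := {u, v, w} with hS3
    have huS3 : u ∉ ({v, w} : Finset V) := by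
      simp only [Finset.mem_insert, Finset.mem_singleton]
      push_neg
      exact ⟨Ne.symm hvu, Ne.symm hwu⟩
    have hS3sub : S3 ⊆ Tf := by
      intro x hx
      simp only [hS3, Finset.mem_insert, Finset.mem_singleton] at hx
      rcases hx with rfl | rfl | rfl
      · exact (hmemTf x).mpr huT
      · exact (hmemTf x).mpr hvT
      · exact (hmemTf x).mpr hwT
    have hS3card : S3.card = 3 := by
      rw [hS3, Finset.card_insert_of_notMem huS3, Finset.card_pair hvw]
    have hsplit : ∑ x ∈ Tf \ S3, (R.filter (fun e => x ∈ ends e)).card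
        + ∑ x ∈ S3, (R.filter (fun e => x ∈ ends e)).card
        = ∑ x ∈ Tf, (R.filter (fun e => x ∈ ends e)).card :=
      Finset.sum_sdiff hS3sub
    have hS3sum : ∑ x ∈ S3, (R.filter (fun e => x ∈ ends e)).card ≤ 3 := by
      rw [hS3, Finset.sum_insert huS3, Finset.sum_pair hvw]
      have h1 := hdeg1 u (Or.inl hua)
      have h2 := hdeg1 v hvfree
      have h3 := hdeg1 w hwfree
      omega
    have hrest : ∑ x ∈ Tf \ S3, (R.filter (fun e => x ∈ ends e)).card
        ≤ 2 * (Tf \ S3).card := by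
      calc ∑ x ∈ Tf \ S3, (R.filter (fun e => x ∈ ends e)).card
          ≤ (Tf \ S3).card • 2 := Finset.sum_le_card_nsmul _ _ 2 (fun x _ => hdeg2 x)
        _ = 2 * (Tf \ S3).card := by rw [smul_eq_mul, mul_comm]
    have hcsd : (Tf \ S3).card = Tf.card - 3 := by
      rw [Finset.card_sdiff_of_subset hS3sub, hS3card]
    have h3le : 3 ≤ Tf.card := hS3card ▸ Finset.card_le_card hS3sub
    omega

lemma other_end {z : Sym2 V} {u : V} (hu : u ∈ z) : ∃ w, z = s(u, w) := by
  obtain ⟨p, q, rfl⟩ := sym2_cases z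
  rcases Sym2.mem_iff.mp hu with rfl | rfl
  · exact ⟨q, rfl⟩
  · exact ⟨p, Sym2.eq_swap.symm⟩

lemma step (ends : E → Sym2 V) (hloopless : ∀ e : E, ¬ (ends e).IsDiag) {k Δ : ℕ}
    (hΔ : ∀ x : V, (univ.filter (fun e => x ∈ ends e)).card ≤ Δ)
    (hk1 : Δ + 1 ≤ k) (hk2 : 3 * Δ ≤ 2 * k + 1)
    {s : Finset E} {c : E → Fin k} (hc : ProperOn ends s c) {e : E} (he : e ∉ s) :
    ∃ c' : E → Fin k, ProperOn ends (insert e s) c' := by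
  obtain ⟨u, v, hends⟩ := sym2_cases (ends e)
  have huv : u ≠ v := fun h => hloopless e (by rw [hends, h]; exact Sym2.mk_isDiag_iff.mpr rfl)
  have hue : u ∈ ends e := by rw [hends]; exact Sym2.mem_mk_left u v
  have hve : v ∈ ends e := by rw [hends]; exact Sym2.mem_mk_right u v
  have hmem_e : ∀ x, x ∈ ends e → x = u ∨ x = v := by
    intro x hx; rw [hends, Sym2.mem_iff] at hx; exact hx
  -- degree bounds at u and v (e is not counted in s)
  have hdeg : ∀ x, x ∈ ends e → (s.filter (fun e' => x ∈ ends e')).card + 1 ≤ Δ := by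
    intro x hx
    have hsub : insert e (s.filter (fun e' => x ∈ ends e')) ⊆
        univ.filter (fun e' => x ∈ ends e') := by
      intro e' he'
      rw [Finset.mem_insert] at he'
      rcases he' with rfl | he'
      · exact Finset.mem_filter.mpr ⟨Finset.mem_univ _, hx⟩
      · exact Finset.mem_filter.mpr ⟨Finset.mem_univ _, (Finset.mem_filter.mp he').2⟩
    have hnm : e ∉ s.filter (fun e' => x ∈ ends e') :=
      fun h => he (Finset.mem_filter.mp h).1
    calc (s.filter (fun e' => x ∈ ends e')).card + 1
        = (insert e (s.filter (fun e' => x ∈ ends e'))).card :=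
          (Finset.card_insert_of_notMem hnm).symm
      _ ≤ (univ.filter (fun e' => x ∈ ends e')).card := Finset.card_le_card hsub
      _ ≤ Δ := hΔ x
  have hMu : k - Δ + 1 ≤ (missing ends s c u).card := by
    have h1 := missing_card_ge ends s c u
    have h2 := hdeg u hue
    omega
  have hMv : k - Δ + 1 ≤ (missing ends s c v).card := by
    have h1 := missing_card_ge ends s c v
    have h2 := hdeg v hve
    omega
  -- Case 1: a common free color at u and v
  by_cases h1 : (missing ends s c u ∩ missing ends s c v).Nonempty
  · obtain ⟨γ, hγ⟩ := h1
    rw [Finset.mem_inter, mem_missing, mem_missing] at hγ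
    refine ⟨Function.update c e γ, properOn_update_insert ends hc he ?_⟩
    intro x hx
    rcases hmem_e x hx with rfl | rfl
    · exact hγ.1
    · exact hγ.2
  · have hdisj_uv : Disjoint (missing ends s c u) (missing ends s c v) := by
      rw [Finset.disjoint_iff_inter_eq_empty]
      exact Finset.not_nonempty_iff_eq_empty.mp h1
    -- pick δ free at u, β free at v
    have hMu_ne : (missing ends s c u).Nonempty := by
      rw [← Finset.card_pos]; omega
    have hMv_ne : (missing ends s c v).Nonempty := by
      rw [← Finset.card_pos]; omega
    obtain ⟨δ, hδ⟩ := hMu_ne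
    obtain ⟨β, hβ⟩ := hMv_ne
    have hδu : freeAt ends s c u δ := mem_missing.mp hδ
    have hβv : freeAt ends s c v β := mem_missing.mp hβ
    have hβnu : β ∉ missing ends s c u := Finset.disjoint_right.mp hdisj_uv hβ
    have hδnv : δ ∉ missing ends s c v := Finset.disjoint_left.mp hdisj_uv hδ
    have hβδ : β ≠ δ := fun h => hβnu (h ▸ hδ)
    -- the β-edge f = uw at u
    have : ¬ freeAt ends s c u β := fun h => hβnu (mem_missing.mpr h)
    rw [freeAt] at this
    push_neg at this
    obtain ⟨f, hfs, huf, hcf⟩ := this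
    obtain ⟨w, hfends⟩ := other_end huf
    have huw : u ≠ w := fun h => hloopless f (by rw [hfends, h]; exact Sym2.mk_isDiag_iff.mpr rfl)
    have hwf : w ∈ ends f := by rw [hfends]; exact Sym2.mem_mk_right u w
    have hmem_f : ∀ x, x ∈ ends f → x = u ∨ x = w := by
      intro x hx; rw [hfends, Sym2.mem_iff] at hx; exact hx
    have hvw : v ≠ w := by
      rintro rfl
      exact hβv f hfs hwf hcf
    have hvnf : v ∉ ends f := by
      intro hv
      rcases hmem_f v hv with rfl | rfl
      · exact huv rfl
      · exact hvw rfl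
    have hdegw : (s.filter (fun e' => w ∈ ends e')).card ≤ Δ := by
      refine le_trans (Finset.card_le_card ?_) (hΔ w)
      intro e' he'
      exact Finset.mem_filter.mpr ⟨Finset.mem_univ _, (Finset.mem_filter.mp he').2⟩
    have hMw : k - Δ ≤ (missing ends s c w).card := by
      have h1 := missing_card_ge ends s c w
      omega
    -- Case 2: a common free color at u and w
    by_cases h2 : (missing ends s c u ∩ missing ends s c w).Nonempty
    · obtain ⟨α, hα⟩ := h2
      rw [Finset.mem_inter, mem_missing, mem_missing] at hα
      obtain ⟨hαu, hαw⟩ := hα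
      have hαβ : α ≠ β := fun h => hβnu (mem_missing.mpr (h ▸ hαu))
      set c₁ := Function.update c f α with hc₁
      have hc₁proper : ProperOn ends s c₁ := by
        refine properOn_update ends hc ?_
        intro x hx e' he' hef hx'
        rcases hmem_f x hx with rfl | rfl
        · exact hαu e' he' hx'
        · exact hαw e' he' hx'
      refine ⟨Function.update c₁ e β, properOn_update_insert ends hc₁proper he ?_⟩
      intro x hx e' he' hx' hce'
      rcases hmem_e x hx with rfl | rfl
      · by_cases hef : e' = f
        · subst hef
          rw [hc₁, Function.update_self] at hce'
          exact hαβ hce'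
        · rw [hc₁, Function.update_of_ne hef] at hce'
          exact hc e' he' f hfs hef ⟨x, hx', huf⟩ (hce'.trans hcf.symm)
      · have hef : e' ≠ f := fun h => hvnf (h ▸ hx')
        rw [hc₁, Function.update_of_ne hef] at hce'
        exact hβv e' he' hx' hce'
    · -- no common free color at u,w ; find α free at both v and w
      have hdisj_uw : Disjoint (missing ends s c u) (missing ends s c w) := by
        rw [Finset.disjoint_iff_inter_eq_empty]
        exact Finset.not_nonempty_iff_eq_empty.mp h2
      have h3 : (missing ends s c v ∩ missing ends s c w).Nonempty := by
        by_contra h3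
        have hdisj_vw : Disjoint (missing ends s c v) (missing ends s c w) := by
          rw [Finset.disjoint_iff_inter_eq_empty]
          exact Finset.not_nonempty_iff_eq_empty.mp h3
        have hd1 : Disjoint (missing ends s c u ∪ missing ends s c v)
            (missing ends s c w) := Finset.disjoint_union_left.mpr ⟨hdisj_uw, hdisj_vw⟩
        have hcard : (missing ends s c u ∪ missing ends s c v ∪ missing ends s c w).card
            = (missing ends s c u).card + (missing ends s c v).card
              + (missing ends s c w).card := by
          rw [Finset.card_union_of_disjoint hd1, Finset.card_union_of_disjoint hdisj_uv]
        have hle : (missing ends s c u ∪ missing ends s c v ∪ missing ends s c w).card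
            ≤ k := by
          calc _ ≤ (univ : Finset (Fin k)).card := Finset.card_le_card (Finset.subset_univ _)
            _ = k := by rw [Finset.card_univ, Fintype.card_fin]
        omega
      obtain ⟨α, hα⟩ := h3
      rw [Finset.mem_inter, mem_missing, mem_missing] at hα
      obtain ⟨hαv, hαw⟩ := hα
      have hαnu : α ∉ missing ends s c u :=
        Finset.disjoint_right.mp hdisj_uv (mem_missing.mpr hαv)
      have hδα : δ ≠ α := fun h => hαnu (h ▸ hδ)
      have hβα : β ≠ α := fun h => hαw f hfs hwf (hcf.trans h)
      have hδw : δ ∉ missing ends s c w := Finset.disjoint_left.mp hdisj_uw hδ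
      -- Kempe chain swap with colors δ (free at u) and α
      obtain ⟨T, c', huT, hc'prop, hc'ub, hpres_out, hpres_col, hunch, hcontra⟩ :=
        swap_main ends hloopless hc hδα hδu
      by_cases hvT : v ∈ T
      · by_cases hwT : w ∈ T
        · -- impossible: three chain endpoints
          exact (hcontra v w hvT hwT
            (fun h => huv h.symm) (fun h => huw h.symm) hvw
            (Or.inr hαv) (Or.inr hαw)).elim
        · -- w outside the chain: swap, recolor f to α, extend with β
          have hαw' : freeAt ends s c' w α := (hpres_out w hwT α).mpr hαw
          have hcf' : c' f = β :=
            (hunch f hfs (by rw [hcf]; exact hβδ) (by rw [hcf]; exact hβα)).trans hcf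
          set c₂ := Function.update c' f α with hc₂
          have hc₂proper : ProperOn ends s c₂ := by
            refine properOn_update ends hc'prop ?_
            intro x hx e' he' hef hx'
            rcases hmem_f x hx with rfl | rfl
            · exact hc'ub e' he' hx'
            · exact hαw' e' he' hx'
          refine ⟨Function.update c₂ e β, properOn_update_insert ends hc₂proper he ?_⟩
          intro x hx e' he' hx' hce'
          rcases hmem_e x hx with rfl | rfl
          · by_cases hef : e' = f
            · subst hef
              rw [hc₂, Function.update_self] at hce'
              exact hβα hce'.symm
            · rw [hc₂, Function.update_of_ne hef] at hce'
              exact hc'prop e' he' f hfs hef ⟨x, hx', huf⟩ (hce'.trans hcf'.symm)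
          · have hef : e' ≠ f := fun h => hvnf (h ▸ hx')
            rw [hc₂, Function.update_of_ne hef] at hce'
            have hβv' : freeAt ends s c' x β :=
              (hpres_col x β hβδ hβα).mpr hβv
            exact hβv' e' he' hx' hce'
      · -- v outside the chain: swap and extend with α
        have hαv' : freeAt ends s c' v α := (hpres_out v hvT α).mpr hαv
        refine ⟨Function.update c' e α, properOn_update_insert ends hc'prop he ?_⟩
        intro x hx
        rcases hmem_e x hx with rfl | rfl
        · exact hc'ub
        · exact hαv'

lemma colorAll (ends : E → Sym2 V) (hloopless : ∀ e : E, ¬ (ends e).IsDiag) {k Δ : ℕ}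
    (hΔ : ∀ x : V, (univ.filter (fun e => x ∈ ends e)).card ≤ Δ)
    (hk1 : Δ + 1 ≤ k) (hk2 : 3 * Δ ≤ 2 * k + 1) (s : Finset E) :
    ∃ c : E → Fin k, ProperOn ends s c := by
  induction s using Finset.induction_on with
  | empty =>
    refine ⟨fun _ => ⟨0, by omega⟩, ?_⟩
    intro e₁ h₁
    exact absurd h₁ (Finset.notMem_empty e₁)
  | @insert e s he ih =>
    obtain ⟨c, hc⟩ := ih
    exact step ends hloopless hΔ hk1 hk2 hc he

end ShannonAux

/-- Shannon's theorem: every loopless multigraph with maximum degree at most `Δ`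
admits a proper edge coloring with at most `⌈(3/2)·Δ⌉ = (3Δ+1)/2` colors; the color
classes of such a coloring partition the edge set into at most that many matchings. -/
theorem stmt_4 {V E : Type*} [Finite E] (ends : E → Sym2 V)
    (hloopless : ∀ e : E, ¬ (ends e).IsDiag)
    (Δ : ℕ) (hΔ : ∀ v : V, Nat.card {e : E | v ∈ ends e} ≤ Δ) :
    ∃ c : E → Fin ((3 * Δ + 1) / 2), ∀ e₁ e₂ : E, e₁ ≠ e₂ →
      (∃ v, v ∈ ends e₁ ∧ v ∈ ends e₂) → c e₁ ≠ c e₂ := by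
  classical
  haveI : Fintype E := Fintype.ofFinite E
  by_cases hE : Nonempty E
  · obtain ⟨e₀⟩ := hE
    have hΔ' : ∀ x : V, ((Finset.univ : Finset E).filter (fun e => x ∈ ends e)).card ≤ Δ := by
      intro x
      have h := hΔ x
      rwa [Nat.card_eq_fintype_card, Fintype.card_subtype] at h
    obtain ⟨u, v, he₀⟩ := ShannonAux.sym2_cases (ends e₀)
    have h1 : 1 ≤ Δ := by
      have hm : e₀ ∈ Finset.univ.filter (fun e => u ∈ ends e) :=
        Finset.mem_filter.mpr ⟨Finset.mem_univ _, by rw [he₀]; exact Sym2.mem_mk_left u v⟩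
      have := Finset.card_pos.mpr ⟨e₀, hm⟩
      exact le_trans this (hΔ' u)
    obtain ⟨c, hc⟩ := ShannonAux.colorAll (k := (3 * Δ + 1) / 2) ends hloopless hΔ'
      (by omega) (by omega) Finset.univ
    exact ⟨c, fun e₁ e₂ hne hadj =>
      hc e₁ (Finset.mem_univ _) e₂ (Finset.mem_univ _) hne hadj⟩
  · refine ⟨fun e => (hE ⟨e⟩).elim, fun e₁ => (hE ⟨e₁⟩).elim⟩
end

section
/- For a simple graph G, the chromatic index χ'(G) satisfies Δ(G) ≤ χ'(G) ≤ Δ(G) + 1. -/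
set_option linter.unusedSectionVars false
set_option maxHeartbeats 1000000

namespace Vizing

variable {V : Type*} [Fintype V] [DecidableEq V] {n : ℕ}

def Proper (C : Sym2 V → Option (Fin n)) : Prop :=
  ∀ ⦃v u w : V⦄, u ≠ w → ∀ a : Fin n, C s(v,u) = some a → C s(v,w) ≠ some a

def Missing (C : Sym2 V → Option (Fin n)) (v : V) (a : Fin n) : Prop :=
  ∀ u, C s(v,u) ≠ some a

lemma exists_missing (C : Sym2 V → Option (Fin n)) (v : V)
    (h : (Finset.univ.filter fun u => (C s(v,u)).isSome).card < n) :
    ∃ a, Missing C v a := by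
  by_contra hcon
  push_neg at hcon
  simp only [Missing, not_forall, not_not] at hcon
  choose f hf using hcon
  have hinj : Function.Injective f := by
    intro a b hab
    have h1 := hf a
    rw [hab] at h1
    rw [hf b] at h1
    exact (Option.some_injective _ h1).symm
  have h2 : (Finset.univ : Finset (Fin n)).card ≤
      (Finset.univ.filter fun u => (C s(v,u)).isSome).card := by
    apply Finset.card_le_card_of_injOn f
    · intro a _
      simp only [Finset.mem_coe, Finset.mem_filter, Finset.mem_univ, true_and]
      rw [hf a]; rfl
    · exact hinj.injOn
  simp only [Finset.card_univ, Fintype.card_fin] at h2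
  omega

lemma Proper.mono {C C' : Sym2 V → Option (Fin n)} (hC : Proper C)
    (h : ∀ e, C' e ≠ none → C' e = C e) : Proper C' := by
  intro v u w huw a hu hw
  have h1 : C s(v,u) = some a := by rw [← h _ (by simp [hu])]; exact hu
  have h2 : C s(v,w) = some a := by rw [← h _ (by simp [hw])]; exact hw
  exact hC huw a h1 h2

lemma Missing.mono {C C' : Sym2 V → Option (Fin n)} {v a} (hM : Missing C v a)
    (h : ∀ e, C' e ≠ none → C' e = C e) : Missing C' v a := by
  intro u hu
  exact hM u (by rw [← h _ (by simp [hu])]; exact hu)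

lemma proper_update {C : Sym2 V → Option (Fin n)} (hC : Proper C) {x y : V}
    (hxy : x ≠ y) {b : Fin n} (hx : Missing C x b) (hy : Missing C y b) :
    Proper (Function.update C s(x,y) (some b)) := by
  intro v u w huw a hu hw
  rw [Function.update_apply] at hu hw
  split_ifs at hu hw with h1 h2 h2
  · exact huw (Sym2.congr_right.mp (h1.trans h2.symm))
  · obtain rfl : b = a := by simpa using hu
    rcases Sym2.eq_iff.mp h1 with ⟨rfl, rfl⟩ | ⟨rfl, rfl⟩
    · exact hx w hw
    · exact hy w hw
  · obtain rfl : b = a := by simpa using hw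
    rcases Sym2.eq_iff.mp h2 with ⟨rfl, rfl⟩ | ⟨rfl, rfl⟩
    · exact hx u hu
    · exact hy u hu
  · exact hC huw a hu hw

lemma missing_update_none {C : Sym2 V → Option (Fin n)} (hC : Proper C) {x z : V}
    {c1 : Fin n} (hz : C s(x,z) = some c1) :
    Missing (Function.update C s(x,z) none) x c1 := by
  intro u
  rw [Function.update_apply]
  split_ifs with h
  · simp
  · have huz : z ≠ u := fun h' => h (by rw [h'])
    exact hC huz c1 hz

lemma update_none_sub (C : Sym2 V → Option (Fin n)) (f : Sym2 V) :
    ∀ e, Function.update C f none e ≠ none → Function.update C f none e = C e := by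
  intro e he
  rw [Function.update_apply] at he ⊢
  split_ifs at he ⊢ with h
  · exact absurd rfl he
  · rfl

lemma chain'_transfer {R S : V → V → Prop} :
    ∀ {l : List V}, l.Chain' R → (∀ a ∈ l, ∀ b ∈ l.tail, R a b → S a b) → l.Chain' S := by
  intro l
  induction l with
  | nil => intro _ _; exact List.isChain_nil
  | cons a l ih =>
    intro h himp
    unfold List.Chain' at h ⊢; rw [List.isChain_cons] at h ⊢
    refine ⟨fun b hb => himp a (by simp) b (by simpa using List.mem_of_mem_head? hb)
      (h.1 b hb), ih h.2 (fun a' ha' b hb hr =>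
        himp a' (by simp [ha']) b (by simpa using List.mem_of_mem_tail hb) hr)⟩

section Swap

variable (C : Sym2 V → Option (Fin n)) (α β : Fin n) (S : Set V)

def swapCond (e : Sym2 V) : Prop :=
  (∃ v ∈ e, v ∈ S) ∧ (C e = some α ∨ C e = some β)

open Classical in
noncomputable def swap : Sym2 V → Option (Fin n) := fun e =>
  if swapCond C α β S e then (if C e = some α then some β else some α) else C e

variable {C α β S}

lemma swap_eq_of_not_cond {e : Sym2 V} (h : ¬ swapCond C α β S e) :
    swap C α β S e = C e := by
  rw [swap, if_neg h]

lemma swap_eq_some_cases {e : Sym2 V} {a : Fin n} (h : swap C α β S e = some a) :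
    (¬ swapCond C α β S e ∧ C e = some a) ∨
    ((∃ v ∈ e, v ∈ S) ∧ ((C e = some α ∧ a = β) ∨ (C e = some β ∧ a = α))) := by
  rw [swap] at h
  split_ifs at h with h1 h2
  · exact Or.inr ⟨h1.1, Or.inl ⟨h2, by simpa using h.symm⟩⟩
  · exact Or.inr ⟨h1.1, Or.inr ⟨h1.2.resolve_left h2, by simpa using h.symm⟩⟩
  · exact Or.inl ⟨h1, h⟩

variable (hC : Proper C) (hαβ : α ≠ β)
variable (hcl : ∀ u w, u ∈ S → (C s(u,w) = some α ∨ C s(u,w) = some β) → w ∈ S)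

include hcl in
lemma swap_eq_of_nmem {u : V} (hu : u ∉ S) (w : V) :
    swap C α β S s(u,w) = C s(u,w) := by
  apply swap_eq_of_not_cond
  rintro ⟨⟨v, hv, hvS⟩, hcol⟩
  rcases Sym2.mem_iff.mp hv with rfl | rfl
  · exact hu hvS
  · exact hu (hcl v u hvS (by rwa [Sym2.eq_swap]))

lemma swap_ne_none_iff (e : Sym2 V) : swap C α β S e ≠ none ↔ C e ≠ none := by
  rw [swap]
  split_ifs with h1 h2
  · simp [h2]
  · simp [h1.2.resolve_left h2]
  · rfl

include hC hαβ hcl in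
lemma swap_proper : Proper (swap C α β S) := by
  intro v u w huw a hu hw
  -- derive membership of v in S if either edge is swapped
  rcases swap_eq_some_cases hu with ⟨hnc1, he1⟩ | ⟨⟨x, hx, hxS⟩, hcase1⟩
  · rcases swap_eq_some_cases hw with ⟨hnc2, he2⟩ | ⟨⟨x, hx, hxS⟩, hcase2⟩
    · exact hC huw a he1 he2
    · -- e2 swapped so a ∈ {α, β}, and v ∈ S; but e1 unswapped with C e1 = some a
      have hvS : v ∈ S := by
        rcases Sym2.mem_iff.mp hx with rfl | rfl
        · exact hxS
        · exact hcl x v hxS (by rw [Sym2.eq_swap]; exact hcase2.elim (fun h => Or.inl h.1) (fun h => Or.inr h.1))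
      apply hnc1
      refine ⟨⟨v, by simp, hvS⟩, ?_⟩
      rcases hcase2 with ⟨_, rfl⟩ | ⟨_, rfl⟩
      · exact Or.inr he1
      · exact Or.inl he1
  · have hvS : v ∈ S := by
      rcases Sym2.mem_iff.mp hx with rfl | rfl
      · exact hxS
      · exact hcl x v hxS (by rw [Sym2.eq_swap]; exact hcase1.elim (fun h => Or.inl h.1) (fun h => Or.inr h.1))
    rcases swap_eq_some_cases hw with ⟨hnc2, he2⟩ | ⟨_, hcase2⟩
    · apply hnc2
      refine ⟨⟨v, by simp, hvS⟩, ?_⟩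
      rcases hcase1 with ⟨_, rfl⟩ | ⟨_, rfl⟩
      · exact Or.inr he2
      · exact Or.inl he2
    · -- both swapped: original colors must be equal, contradicting properness
      rcases hcase1 with ⟨h1, rfl⟩ | ⟨h1, h1'⟩
      · rcases hcase2 with ⟨h2, _⟩ | ⟨h2, h2'⟩
        · exact hC huw α h1 h2
        · exact hαβ h2'.symm
      · rcases hcase2 with ⟨h2, h2'⟩ | ⟨h2, _⟩
        · subst h1'; exact hαβ (by simpa using h2')
        · subst h1'; exact hC huw β h1 h2

include hαβ in
lemma missing_swap_of_mem {v : V} (hv : v ∈ S) (hβ : Missing C v β) :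
    Missing (swap C α β S) v α := by
  intro u h
  rcases swap_eq_some_cases h with ⟨hnc, he⟩ | ⟨_, hcase⟩
  · exact hnc ⟨⟨v, by simp, hv⟩, Or.inl he⟩
  · rcases hcase with ⟨_, hba⟩ | ⟨hcβ, _⟩
    · exact hαβ hba
    · exact hβ u hcβ

lemma missing_swap_of_ne {v : V} {γ : Fin n} (hγα : γ ≠ α) (hγβ : γ ≠ β)
    (hγ : Missing C v γ) : Missing (swap C α β S) v γ := by
  intro u h
  rcases swap_eq_some_cases h with ⟨_, he⟩ | ⟨_, hcase⟩
  · exact hγ u he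
  · rcases hcase with ⟨_, h'⟩ | ⟨_, h'⟩
    · exact hγβ h'
    · exact hγα h'

end Swap

def Deg2 (K : SimpleGraph V) : Prop :=
  ∀ ⦃v a b c : V⦄, K.Adj v a → K.Adj v b → K.Adj v c → a = b ∨ a = c ∨ b = c

def Deg1at (K : SimpleGraph V) (v : V) : Prop :=
  ∀ ⦃a b : V⦄, K.Adj v a → K.Adj v b → a = b

lemma aux_paths {K : SimpleGraph V} (hK : Deg2 K) {b u0 : V} (p : K.Walk u0 b) :
    ∀ {c : V} (q : K.Walk u0 c), Deg1at K b → Deg1at K c → b ≠ c →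
    p.IsPath → q.IsPath →
    ∀ a : V, K.Adj a u0 → a ∉ p.support → a ∉ q.support → False := by
  induction p with
  | nil =>
    intro c q hb hc hbc hp hq a hau hap haq
    cases q with
    | nil => exact hbc rfl
    | cons hq1 q' =>
      have ha : a = _ := hb hau.symm hq1
      apply haq
      rw [ha, SimpleGraph.Walk.support_cons]
      exact List.mem_cons_of_mem _ (SimpleGraph.Walk.start_mem_support _)
  | @cons u u' _ hadj p' ih =>
    intro c q hb hc hbc hp hq a hau hap haq
    cases q with
    | nil =>
      have ha : a = u' := hc hau.symm hadj
      apply hap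
      rw [ha, SimpleGraph.Walk.support_cons]
      exact List.mem_cons_of_mem _ (SimpleGraph.Walk.start_mem_support _)
    | @cons _ q1 _ hq1 q' =>
      rcases hK hau.symm hadj hq1 with h | h | h
      · apply hap
        rw [h, SimpleGraph.Walk.support_cons]
        exact List.mem_cons_of_mem _ (SimpleGraph.Walk.start_mem_support _)
      · apply haq
        rw [h, SimpleGraph.Walk.support_cons]
        exact List.mem_cons_of_mem _ (SimpleGraph.Walk.start_mem_support _)
      · subst h
        have hp' := (SimpleGraph.Walk.cons_isPath_iff _ _).mp hp
        have hq' := (SimpleGraph.Walk.cons_isPath_iff _ _).mp hq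
        exact ih q' hb hc hbc hp'.1 hq'.1 u hadj hp'.2 hq'.2

lemma no_three [DecidableEq V] {K : SimpleGraph V} (hK : Deg2 K) {x b c : V}
    (hx : Deg1at K x) (hb : Deg1at K b) (hc : Deg1at K c)
    (hxb : x ≠ b) (hxc : x ≠ c) (hbc : b ≠ c)
    (h1 : K.Reachable x b) (h2 : K.Reachable x c) : False := by
  obtain ⟨p0⟩ := h1
  obtain ⟨q0⟩ := h2
  obtain ⟨p, hp⟩ := p0.toPath
  obtain ⟨q, hq⟩ := q0.toPath
  cases p with
  | nil => exact hxb rfl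
  | cons hadj p' =>
    cases q with
    | nil => exact hxc rfl
    | cons hq1 q' =>
      have heq := hx hadj hq1
      subst heq
      have hp' := (SimpleGraph.Walk.cons_isPath_iff _ _).mp hp
      have hq' := (SimpleGraph.Walk.cons_isPath_iff _ _).mp hq
      exact aux_paths hK p' q' hb hc hbc hp'.1 hq'.1 x hadj hp'.2 hq'.2

lemma exists_maximal {Q : List V → Prop} (N : ℕ) (hbd : ∀ l, Q l → l.length ≤ N)
    {l0 : List V} (h0 : Q l0) : ∃ l, Q l ∧ ∀ z, ¬ Q (l ++ [z]) := by
  by_contra hcon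
  push_neg at hcon
  have key : ∀ k : ℕ, ∃ l, Q l ∧ l.length = l0.length + k := by
    intro k
    induction k with
    | zero => exact ⟨l0, h0, rfl⟩
    | succ k ihk =>
      obtain ⟨l, hl, hlen⟩ := ihk
      obtain ⟨z, hz⟩ := hcon l hl
      exact ⟨l ++ [z], hz, by simp [hlen]; omega⟩
  obtain ⟨l, hl, hlen⟩ := key (N + 1)
  have := hbd l hl
  omega

lemma split_unique {z : V} : ∀ (u u' v v' : List V),
    u ++ z :: v = u' ++ z :: v' → z ∉ u → z ∉ u' → u = u' := by
  intro u
  induction u with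
  | nil =>
    intro u' v v' heq _ hzu'
    cases u' with
    | nil => rfl
    | cons c u'' =>
      simp at heq
      exact absurd (by simp [heq.1]) hzu'
  | cons c u'' ih =>
    intro u' v v' heq hzu hzu'
    cases u' with
    | nil =>
      simp at heq
      exact absurd (by simp [heq.1]) hzu
    | cons d u''' =>
      simp at heq
      obtain ⟨rfl, heq2⟩ := heq
      rw [ih u''' v v' heq2 (fun h => hzu (by simp [h])) (fun h => hzu' (by simp [h]))]

lemma chain'_transfer' {R S : V → V → Prop} :
    ∀ {l : List V}, l.Chain' R →
    (∀ l1 a b l2, l = l1 ++ a :: b :: l2 → R a b → S a b) → l.Chain' S := by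
  intro l
  induction l with
  | nil => intro _ _; exact List.isChain_nil
  | cons a l ih =>
    intro h himp
    cases l with
    | nil => exact List.isChain_singleton a
    | cons b l' =>
      unfold List.Chain' at h ⊢; rw [List.isChain_cons_cons] at h ⊢
      exact ⟨himp [] a b l' rfl h.1,
        ih h.2 (fun l1 c d l2 hdec hr => himp (a :: l1) c d l2 (by simp [hdec]) hr)⟩


section Fan

variable (E : Finset (Sym2 V)) (x : V)

def FanRel (C : Sym2 V → Option (Fin n)) (a b : V) : Prop :=
  ∃ c : Fin n, C s(x,b) = some c ∧ Missing C a c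

def IsFan (C : Sym2 V → Option (Fin n)) (l : List V) : Prop :=
  l.Chain' (FanRel x C) ∧ (x :: l).Nodup ∧ ∀ v ∈ l, s(x,v) ∈ E

variable {E x}

lemma rotate : ∀ (l : List V) (y : V) (C : Sym2 V → Option (Fin n)),
    Proper C → (∀ e, C e ≠ none → e ∈ E) →
    IsFan E x C (y :: l) → C s(x,y) = none →
    ∀ b : Fin n, Missing C x b → Missing C ((y :: l).getLast (by simp)) b →
    ∃ C' : Sym2 V → Option (Fin n),
      Proper C' ∧ (∀ e, C' e ≠ none ↔ (C e ≠ none ∨ e = s(x,y))) := by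
  intro l
  induction l with
  | nil =>
    intro y C hC hsupp hfan huncol b hbx hby
    have hxy : x ≠ y := by
      have h := hfan.2.1
      rw [List.nodup_cons] at h
      simpa using h.1
    refine ⟨Function.update C s(x,y) (some b),
      proper_update hC hxy hbx (by simpa using hby), fun e => ?_⟩
    rw [Function.update_apply]
    split_ifs with h
    · simp [h]
    · simp [h]
  | cons z t ih =>
    intro y C hC hsupp hfan huncol b hbx hblast
    obtain ⟨hchain, hnodup, hedges⟩ := hfan
    have hxmem : x ∉ y :: z :: t := (List.nodup_cons.mp hnodup).1
    have hnd_y : (y :: z :: t).Nodup := (List.nodup_cons.mp hnodup).2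
    have hynt : y ∉ z :: t := (List.nodup_cons.mp hnd_y).1
    have hnd_zt : (z :: t).Nodup := (List.nodup_cons.mp hnd_y).2
    have hznt : z ∉ t := (List.nodup_cons.mp hnd_zt).1
    have hxy : x ≠ y := fun h => hxmem (by simp [h])
    have hxz : x ≠ z := fun h => hxmem (by simp [h])
    have hyz : y ≠ z := fun h => hynt (by simp [h])
    have hxnt : x ∉ z :: t := fun h => hxmem (List.mem_cons_of_mem _ h)
    obtain ⟨c1, hc1, hmyc1⟩ : FanRel x C y z := (List.isChain_cons_cons.mp hchain).1
    set C0 := Function.update C s(x,z) none with hC0def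
    set C1 := Function.update C0 s(x,y) (some c1) with hC1def
    have hsxzy : s(x,z) ≠ s(x,y) := fun h => hyz (Sym2.congr_right.mp h).symm
    have hC0sub := update_none_sub C s(x,z)
    have hC0 : Proper C0 := hC.mono hC0sub
    have hm0x : Missing C0 x c1 := missing_update_none hC hc1
    have hm0y : Missing C0 y c1 := hmyc1.mono hC0sub
    have hC1 : Proper C1 := proper_update hC0 hxy hm0x hm0y
    -- values of C1
    have hC1xy : C1 s(x,y) = some c1 := by simp [hC1def]
    have hC1xz : C1 s(x,z) = none := by
      rw [hC1def, Function.update_apply, if_neg hsxzy, hC0def]; simp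
    have hC1other : ∀ e, e ≠ s(x,y) → e ≠ s(x,z) → C1 e = C e := by
      intro e h1 h2
      rw [hC1def, Function.update_apply, if_neg h1, hC0def, Function.update_apply,
        if_neg h2]
    have hb_ne_c1 : b ≠ c1 := fun h => hbx z (h ▸ hc1)
    -- an auxiliary fact: C1 agrees with C on all edges not touching x
    have hC1away : ∀ a u, a ≠ x → a ≠ y → a ≠ z → (u = x ∨ (u ≠ y ∧ u ≠ z)) →
        C1 s(a,u) = C s(a,u) := by
      intro a u ha hay haz hu
      apply hC1other
      · intro h
        rcases Sym2.eq_iff.mp h with ⟨rfl, rfl⟩ | ⟨rfl, rfl⟩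
        · exact ha rfl
        · exact hay rfl
      · intro h
        rcases Sym2.eq_iff.mp h with ⟨rfl, rfl⟩ | ⟨rfl, rfl⟩
        · exact ha rfl
        · exact haz rfl
    -- missing transfer at vertices in z :: t
    have hmiss_transfer : ∀ a ∈ z :: t, ∀ col : Fin n, Missing C a col →
        Missing C1 a col := by
      intro a ha col hcol u
      have hax : a ≠ x := fun h => hxnt (h ▸ ha)
      have hay : a ≠ y := fun h => hynt (h ▸ ha)
      by_cases h1 : s(a,u) = s(x,y)
      · exact absurd (Sym2.eq_iff.mp h1) (by rintro (⟨rfl,rfl⟩|⟨rfl,rfl⟩) <;> simp_all)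
      · by_cases h2 : s(a,u) = s(x,z)
        · rw [hC1def, Function.update_apply, if_neg (h2 ▸ hsxzy), hC0def,
            Function.update_apply, if_pos h2]
          simp
        · rw [hC1other _ h1 h2]; exact hcol u
    have hsupp1 : ∀ e, C1 e ≠ none → e ∈ E := by
      intro e he
      by_cases h1 : e = s(x,y)
      · exact h1 ▸ hedges y (by simp)
      · by_cases h2 : e = s(x,z)
        · exact h2 ▸ hedges z (by simp)
        · rw [hC1other e h1 h2] at he; exact hsupp e he
    have hfan1 : IsFan E x C1 (z :: t) := by
      refine ⟨?_, ?_, fun v hv => hedges v (by simp [hv])⟩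
      · apply chain'_transfer (List.isChain_cons_cons.mp hchain).2
        rintro a ha bb hbb ⟨col, hcolb, hcola⟩
        have hbt : bb ∈ t := hbb
        have hbby : bb ≠ y := fun h => hynt (h ▸ by simp [hbt])
        have hbbz : bb ≠ z := fun h => hznt (h ▸ hbt)
        refine ⟨col, ?_, hmiss_transfer a ha col hcola⟩
        rw [hC1other _ (fun h => hbby (Sym2.congr_right.mp h))
          (fun h => hbbz (Sym2.congr_right.mp h))]
        exact hcolb
      · have : (x :: z :: t).Sublist (x :: y :: z :: t) :=
          (List.sublist_cons_self y (z :: t)).cons₂ x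
        exact hnodup.sublist this
    have hm1x : Missing C1 x b := by
      intro u
      by_cases h1 : s(x,u) = s(x,y)
      · rw [h1, hC1xy]
        exact fun h => hb_ne_c1 (Option.some_injective _ h).symm
      · by_cases h2 : s(x,u) = s(x,z)
        · rw [h2, hC1xz]; simp
        · rw [hC1other _ h1 h2]; exact hbx u
    have hlast_eq : (y :: z :: t).getLast (List.cons_ne_nil _ _)
        = (z :: t).getLast (List.cons_ne_nil _ _) :=
      List.getLast_cons (List.cons_ne_nil z t)
    have hm1last : Missing C1 ((z :: t).getLast (by simp)) b := by
      apply hmiss_transfer _ (List.getLast_mem _) b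
      rw [← hlast_eq]; exact hblast
    obtain ⟨C', hC'p, hC's⟩ := ih z C1 hC1 hsupp1 hfan1 hC1xz b hm1x hm1last
    refine ⟨C', hC'p, fun e => ?_⟩
    rw [hC's e]
    by_cases h1 : e = s(x,y)
    · subst h1
      simp [hC1xy, hsxzy.symm]
    · by_cases h2 : e = s(x,z)
      · subst h2
        simp [hC1xz, hc1, hsxzy]
      · rw [hC1other e h1 h2]
        simp [h1, h2]

lemma missing_exists {hE : ∀ v, (E.filter fun e => v ∈ e).card < n}
    (C : Sym2 V → Option (Fin n)) (hsupp : ∀ e, C e ≠ none → e ∈ E) (v : V) :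
    ∃ a : Fin n, Missing C v a := by
  apply exists_missing
  have hle : (Finset.univ.filter fun u => (C s(v,u)).isSome).card
      ≤ (E.filter fun e => v ∈ e).card := by
    apply Finset.card_le_card_of_injOn (fun u => s(v,u))
    · intro u hu
      simp only [Finset.mem_coe, Finset.mem_filter, Finset.mem_univ, true_and,
        Option.isSome_iff_exists] at hu
      obtain ⟨a, ha⟩ := hu
      simp only [Finset.mem_coe, Finset.mem_filter]
      exact ⟨hsupp _ (by simp [ha]), by simp⟩
    · intro a _ b _ hab
      exact Sym2.congr_right.mp hab
  exact lt_of_le_of_lt hle (hE v)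

lemma extend (hndiag : ∀ e ∈ E, ¬ e.IsDiag)
    (hE : ∀ v, (E.filter fun e => v ∈ e).card < n)
    (C : Sym2 V → Option (Fin n)) (hC : Proper C)
    (hsupp : ∀ e, C e ≠ none → e ∈ E) {x y : V} (hxy : x ≠ y)
    (hxyE : s(x,y) ∈ E) (huncol : C s(x,y) = none) :
    ∃ C' : Sym2 V → Option (Fin n), Proper C' ∧
      ∀ e, C' e ≠ none ↔ (C e ≠ none ∨ e = s(x,y)) := by
  obtain ⟨α, hα⟩ := missing_exists (hE := hE) C hsupp x
  -- a maximal fan starting at y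
  have hQ0 : IsFan E x C (y :: []) :=
    ⟨List.isChain_singleton y, by simp [hxy], by simpa using hxyE⟩
  have hbd : ∀ t, IsFan E x C (y :: t) → t.length ≤ Fintype.card V := by
    intro t ht
    have h1 := ht.2.1.length_le_card
    simp at h1; omega
  obtain ⟨t, hQt, hmax⟩ := exists_maximal (Q := fun t => IsFan E x C (y :: t))
    (Fintype.card V) hbd hQ0
  obtain ⟨hchain, hnodup, hedges⟩ := hQt
  have hlne : (y :: t) ≠ [] := by simp
  obtain ⟨w, hw⟩ : ∃ w, w = (y :: t).getLast hlne := ⟨_, rfl⟩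
  have hwl : w ∈ y :: t := hw ▸ List.getLast_mem hlne
  obtain ⟨β, hβ⟩ := missing_exists (hE := hE) C hsupp w
  have huniq : ∀ (v : V) (γ : Fin n) a b, C s(v,a) = some γ → C s(v,b) = some γ →
      a = b := by
    intro v γ a b h1 h2
    by_contra hne
    exact hC hne γ h1 h2
  by_cases hβx : Missing C x β
  · exact rotate t y C hC hsupp ⟨hchain, hnodup, hedges⟩ huncol β hβx (hw ▸ hβ)
  simp only [Missing, not_forall, not_not] at hβx
  obtain ⟨z, hz⟩ := hβx
  have hαβ : α ≠ β := fun h => hα z (h ▸ hz)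
  have hzx : z ≠ x := by
    intro h
    exact hndiag s(x,z) (hsupp _ (by simp [hz]))
      (by rw [Sym2.mk_isDiag_iff]; exact h.symm)
  have hzl : z ∈ y :: t := by
    by_contra hzl
    apply hmax z
    refine ⟨?_, ?_, ?_⟩
    · show (y :: (t ++ [z])).Chain' (FanRel x C)
      rw [show y :: (t ++ [z]) = (y :: t) ++ [z] by simp]
      unfold List.Chain'; rw [List.isChain_append]
      refine ⟨hchain, List.isChain_singleton z, ?_⟩
      intro a ha b hb
      rw [List.getLast?_eq_getLast_of_ne_nil hlne] at ha
      obtain rfl : a = w := by rw [hw]; exact (by simpa using ha.symm : _)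
      obtain rfl : b = z := by simpa using hb.symm
      exact ⟨β, hz, hβ⟩
    · show (x :: y :: (t ++ [z])).Nodup
      rw [show x :: y :: (t ++ [z]) = (x :: y :: t) ++ [z] by simp]
      rw [List.nodup_append']
      refine ⟨hnodup, List.nodup_singleton z, ?_⟩
      intro a ha hb
      obtain rfl : a = z := by simpa using hb
      rcases List.mem_cons.mp ha with h | h
      · exact hzx h
      · exact hzl h
    · intro v hv
      simp only [List.mem_cons, List.mem_append, List.mem_singleton,
        List.not_mem_nil, or_false] at hv
      rcases hv with rfl | hv | rfl
      · exact hedges v (by simp)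
      · exact hedges v (by simp [hv])
      · exact hsupp _ (by simp [hz])
  have hzy : z ≠ y := by
    intro h
    rw [h, huncol] at hz
    cases hz
  have hzw : z ≠ w := by
    intro h
    exact hβ x (by rw [Sym2.eq_swap, ← h]; exact hz)
  have hzt : z ∈ t := by
    rcases List.mem_cons.mp hzl with h | h
    · exact absurd h hzy
    · exact h
  obtain ⟨t1, t2, rfl⟩ := List.append_of_mem hzt
  have hsplit : y :: (t1 ++ z :: t2) = (y :: t1) ++ (z :: t2) := by simp
  obtain ⟨p, hp⟩ : ∃ p, p = (y :: t1).getLast (List.cons_ne_nil _ _) := ⟨_, rfl⟩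
  have hchainA : ((y :: t1) ++ (z :: t2)).Chain' (FanRel x C) := by
    rw [← hsplit]; exact hchain
  have hpmiss : Missing C p β := by
    have h3 := (List.isChain_append.mp hchainA).2.2
    have h4 : FanRel x C p z := by
      apply h3
      · rw [List.getLast?_eq_getLast_of_ne_nil (List.cons_ne_nil y t1)]
        simp [hp]
      · simp
    obtain ⟨colpz, hcolpz, hpmiss'⟩ := h4
    have : colpz = β := Option.some_inj.mp (hcolpz.symm.trans hz)
    rwa [this] at hpmiss'
  -- nodup facts
  have hxmem : x ∉ y :: (t1 ++ z :: t2) := (List.nodup_cons.mp hnodup).1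
  have hndl : (y :: (t1 ++ z :: t2)).Nodup := (List.nodup_cons.mp hnodup).2
  have hndlA : ((y :: t1) ++ (z :: t2)).Nodup := by rw [← hsplit]; exact hndl
  have hdisj := (List.nodup_append'.mp hndlA).2.2
  have hznyt1 : z ∉ y :: t1 := fun h => hdisj h (by simp)
  have hpyt1 : p ∈ y :: t1 := hp ▸ List.getLast_mem _
  have hwzt2 : w ∈ z :: t2 := by
    have hwe : w = (z :: t2).getLast (List.cons_ne_nil _ _) := by
      rw [hw]
      exact List.getLast_append_of_ne_nil (l := y :: t1) _ (List.cons_ne_nil _ _)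
    rw [hwe]; exact List.getLast_mem _
  have hpw : p ≠ w := fun h => hdisj hpyt1 (h ▸ hwzt2)
  have hxp : x ≠ p := fun h => hxmem (by rw [hsplit, h]; exact List.mem_append_left _ hpyt1)
  have hxw : x ≠ w := fun h => hxmem (h ▸ hwl)
  -- the Kempe-chain graph
  set K : SimpleGraph V := {
    Adj := fun a b => a ≠ b ∧ (C s(a,b) = some α ∨ C s(a,b) = some β)
    symm := by
      constructor
      intro a b h
      exact ⟨h.1.symm, by rw [Sym2.eq_swap]; exact h.2⟩
    loopless := ⟨fun a h => h.1 rfl⟩ } with hKdef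
  have hcl_root : ∀ r u v, K.Reachable r u →
      (C s(u,v) = some α ∨ C s(u,v) = some β) → K.Reachable r v := by
    intro r u v hru hcol
    by_cases huv : u = v
    · exact huv ▸ hru
    · exact hru.trans (SimpleGraph.Adj.reachable ⟨huv, hcol⟩)
  have hK2 : Deg2 K := by
    rintro v a b c ⟨_, ha⟩ ⟨_, hb⟩ ⟨_, hc⟩
    rcases ha with ha|ha <;> rcases hb with hb|hb <;> rcases hc with hc|hc <;>
      first
        | exact Or.inl (huniq v _ _ _ ha hb)
        | exact Or.inr (Or.inl (huniq v _ _ _ ha hc))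
        | exact Or.inr (Or.inr (huniq v _ _ _ hb hc))
  have hdeg1 : ∀ v : V, Missing C v β → Deg1at K v := by
    rintro v hv a b ⟨_, ha⟩ ⟨_, hb⟩
    exact huniq v α a b (ha.resolve_right (hv a)) (hb.resolve_right (hv b))
  have hdeg1x : Deg1at K x := by
    rintro a b ⟨_, ha⟩ ⟨_, hb⟩
    exact huniq x β a b (ha.resolve_left (hα a)) (hb.resolve_left (hα b))
  by_cases hpx : K.Reachable p x
  · -- Case II: p is connected to x, so w is not; swap w's component, rotate full fan
    have hwx : ¬ K.Reachable w x := by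
      intro hwx2
      exact no_three hK2 hdeg1x (hdeg1 p hpmiss) (hdeg1 w hβ) hxp hxw hpw
        hpx.symm hwx2.symm
    have hclS : ∀ u v, u ∈ {v | K.Reachable w v} →
        (C s(u,v) = some α ∨ C s(u,v) = some β) → v ∈ {v | K.Reachable w v} :=
      fun u v hu hcol => hcl_root w u v hu hcol
    have hC1 : Proper (swap C α β {v | K.Reachable w v}) := swap_proper hC hαβ hclS
    have hxS : x ∉ {v | K.Reachable w v} := fun h => hwx h
    have hpS : p ∉ {v | K.Reachable w v} := fun h => hwx (h.trans hpx)
    have hxedges : ∀ u, swap C α β {v | K.Reachable w v} s(x,u) = C s(x,u) :=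
      swap_eq_of_nmem hclS hxS
    have hα1x : Missing (swap C α β {v | K.Reachable w v}) x α :=
      fun u => by rw [hxedges u]; exact hα u
    have hα1w : Missing (swap C α β {v | K.Reachable w v}) w α :=
      missing_swap_of_mem hαβ (show K.Reachable w w from SimpleGraph.Reachable.refl w) hβ
    have hsupp1 : ∀ e, swap C α β {v | K.Reachable w v} e ≠ none → e ∈ E :=
      fun e he => hsupp e ((swap_ne_none_iff e).mp he)
    have hfan1 : IsFan E x (swap C α β {v | K.Reachable w v}) (y :: (t1 ++ z :: t2)) := by
      refine ⟨?_, hnodup, hedges⟩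
      apply chain'_transfer' hchain
      rintro l1 a bb l2 hdec ⟨col, hcolb, hcola⟩
      have hbbx := hxedges bb
      have hcolα : col ≠ α := fun h => hα bb (h ▸ hcolb)
      by_cases hcolβ : col = β
      · subst hcolβ
        obtain rfl : bb = z := huniq x col bb z hcolb hz
        obtain rfl : a = p := by
          have hdec' : (y :: t1) ++ bb :: t2 = (l1 ++ [a]) ++ bb :: l2 := by
            rw [← hsplit, hdec]; simp
          have hndl2 : (l1 ++ a :: bb :: l2).Nodup := by
            rw [hdec] at hndl
            exact hndl
          have hbbl1 : bb ∉ l1 ++ [a] := by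
            rw [List.nodup_append'] at hndl2
            have h1 : bb ∉ l1 := fun h => hndl2.2.2 h (by simp)
            have h2 : a ≠ bb := by
              have h5 := (List.nodup_cons.mp hndl2.2.1).1
              intro h
              apply h5
              rw [h]
              simp
            intro h
            rcases List.mem_append.mp h with h | h
            · exact h1 h
            · exact h2 ((by simpa using h : bb = a)).symm
          have heq := split_unique (y :: t1) (l1 ++ [a]) t2 l2 hdec' hznyt1 hbbl1
          have h5 : (y :: t1).getLast? = some p := by
            rw [List.getLast?_eq_getLast_of_ne_nil (List.cons_ne_nil y t1)]
            simp [hp]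
          have h6 : (y :: t1).getLast? = some a := by
            rw [heq]
            exact List.getLast?_concat
          exact Option.some_inj.mp (h6.symm.trans h5)
        refine ⟨col, by rw [hbbx]; exact hcolb, ?_⟩
        intro u
        rw [swap_eq_of_nmem hclS hpS u]
        exact hpmiss u
      · exact ⟨col, by rw [hbbx]; exact hcolb,
          missing_swap_of_ne hcolα hcolβ hcola⟩
    have huncol1 : swap C α β {v | K.Reachable w v} s(x,y) = none := by
      rw [hxedges y, huncol]
    obtain ⟨C', hC'1, hC'2⟩ := rotate (t1 ++ z :: t2) y _ hC1 hsupp1 hfan1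
      huncol1 α hα1x (hw ▸ hα1w)
    refine ⟨C', hC'1, fun e => ?_⟩
    rw [hC'2 e, swap_ne_none_iff]
  · -- Case I: p is not connected to x; swap p's component, rotate short fan
    have hclS : ∀ u v, u ∈ {v | K.Reachable p v} →
        (C s(u,v) = some α ∨ C s(u,v) = some β) → v ∈ {v | K.Reachable p v} :=
      fun u v hu hcol => hcl_root p u v hu hcol
    have hC1 : Proper (swap C α β {v | K.Reachable p v}) := swap_proper hC hαβ hclS
    have hxS : x ∉ {v | K.Reachable p v} := fun h => hpx h
    have hxedges : ∀ u, swap C α β {v | K.Reachable p v} s(x,u) = C s(x,u) :=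
      swap_eq_of_nmem hclS hxS
    have hα1x : Missing (swap C α β {v | K.Reachable p v}) x α :=
      fun u => by rw [hxedges u]; exact hα u
    have hα1p : Missing (swap C α β {v | K.Reachable p v}) p α :=
      missing_swap_of_mem hαβ (show K.Reachable p p from SimpleGraph.Reachable.refl p) hpmiss
    have hsupp1 : ∀ e, swap C α β {v | K.Reachable p v} e ≠ none → e ∈ E :=
      fun e he => hsupp e ((swap_ne_none_iff e).mp he)
    have hnodup1 : (x :: y :: t1).Nodup :=
      hnodup.sublist (((List.sublist_append_left t1 (z :: t2)).cons₂ y).cons₂ x)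
    have hchainsub : (y :: t1).Chain' (FanRel x C) := (List.isChain_append.mp hchainA).1
    have hfan1 : IsFan E x (swap C α β {v | K.Reachable p v}) (y :: t1) := by
      refine ⟨?_, hnodup1, fun v hv => hedges v ?_⟩
      · apply chain'_transfer hchainsub
        rintro a ha bb hbb ⟨col, hcolb, hcola⟩
        have hbbt1 : bb ∈ t1 := hbb
        have hcolα : col ≠ α := fun h => hα bb (h ▸ hcolb)
        have hcolβ : col ≠ β := by
          intro h
          subst h
          obtain rfl : bb = z := huniq x col bb z hcolb hz
          exact hznyt1 (by simp [hbbt1])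
        exact ⟨col, by rw [hxedges bb]; exact hcolb,
          missing_swap_of_ne hcolα hcolβ hcola⟩
      · rcases List.mem_cons.mp hv with rfl | hv'
        · simp
        · simp [hv']
    have huncol1 : swap C α β {v | K.Reachable p v} s(x,y) = none := by
      rw [hxedges y, huncol]
    obtain ⟨C', hC'1, hC'2⟩ := rotate t1 y _ hC1 hsupp1 hfan1 huncol1 α hα1x
      (hp ▸ hα1p)
    refine ⟨C', hC'1, fun e => ?_⟩
    rw [hC'2 e, swap_ne_none_iff]

end Fan


lemma colorable_aux (E : Finset (Sym2 V)) (hndiag : ∀ e ∈ E, ¬ e.IsDiag)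
    (hE : ∀ v, (E.filter fun e => v ∈ e).card < n) :
    ∀ F : Finset (Sym2 V), F ⊆ E → ∃ C : Sym2 V → Option (Fin n),
      Proper C ∧ ∀ e, C e ≠ none ↔ e ∈ F := by
  intro F
  induction F using Finset.strongInduction with
  | _ F ih =>
    intro hFE
    rcases Finset.eq_empty_or_nonempty F with rfl | ⟨e0, he0⟩
    · exact ⟨fun _ => none, fun v u w h a h1 => by simp at h1, fun e => by simp⟩
    · revert he0
      induction e0 using Sym2.ind with
      | _ xx yy =>
        intro he0
        have hxy : xx ≠ yy := by
          have h := hndiag _ (hFE he0)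
          rw [Sym2.mk_isDiag_iff] at h
          exact h
        obtain ⟨C, hCp, hCs⟩ := ih (F.erase s(xx,yy)) (Finset.erase_ssubset he0)
          ((F.erase_subset _).trans hFE)
        have hsupp : ∀ e, C e ≠ none → e ∈ E := fun e he =>
          hFE (Finset.mem_of_mem_erase ((hCs e).mp he))
        have huncol : C s(xx,yy) = none := by
          by_contra h
          exact (Finset.notMem_erase _ _) ((hCs _).mp h)
        obtain ⟨C', h1, h2⟩ := extend hndiag hE C hCp hsupp hxy (hFE he0) huncol
        refine ⟨C', h1, fun e => ?_⟩
        rw [h2 e, hCs e]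
        constructor
        · rintro (h | rfl)
          · exact Finset.mem_of_mem_erase h
          · exact he0
        · intro h
          by_cases he : e = s(xx,yy)
          · exact Or.inr he
          · exact Or.inl (Finset.mem_erase.mpr ⟨he, h⟩)

end Vizing

/-- Vizing's theorem: for a simple graph `G`, the chromatic index satisfies
`Δ(G) ≤ χ'(G) ≤ Δ(G) + 1`: there exists a proper edge coloring with `Δ(G) + 1`
colors, and every proper edge coloring uses at least `Δ(G)` colors. -/
theorem stmt_10 {V : Type*} [Fintype V] [DecidableEq V]
    (G : SimpleGraph V) [DecidableRel G.Adj] :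
    (∃ c : G.edgeSet → Fin (G.maxDegree + 1), ∀ e₁ e₂ : G.edgeSet, e₁ ≠ e₂ →
      (∃ v, v ∈ (e₁ : Sym2 V) ∧ v ∈ (e₂ : Sym2 V)) → c e₁ ≠ c e₂) ∧
    (∀ (k : ℕ) (c : G.edgeSet → Fin k),
      (∀ e₁ e₂ : G.edgeSet, e₁ ≠ e₂ →
        (∃ v, v ∈ (e₁ : Sym2 V) ∧ v ∈ (e₂ : Sym2 V)) → c e₁ ≠ c e₂) →
      G.maxDegree ≤ k) := by
  classical
  constructor
  · -- upper bound : Vizing coloring with Δ + 1 colors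
    have hndiag : ∀ e ∈ G.edgeFinset, ¬ e.IsDiag := by
      intro e he
      rw [SimpleGraph.mem_edgeFinset] at he
      exact G.not_isDiag_of_mem_edgeSet he
    have hE : ∀ v, (G.edgeFinset.filter fun e => v ∈ e).card < G.maxDegree + 1 := by
      intro v
      have h1 : G.incidenceFinset v = G.edgeFinset.filter fun e => v ∈ e := by
        rw [SimpleGraph.incidenceFinset_eq_filter]
      rw [← h1, SimpleGraph.card_incidenceFinset_eq_degree]
      exact Nat.lt_succ_of_le (G.degree_le_maxDegree v)
    obtain ⟨C, hCp, hCs⟩ := Vizing.colorable_aux (n := G.maxDegree + 1)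
      G.edgeFinset hndiag hE G.edgeFinset (subset_refl _)
    have hsome : ∀ e : G.edgeSet, (C e.val).isSome := by
      intro e
      rw [← Option.ne_none_iff_isSome, hCs]
      exact SimpleGraph.mem_edgeFinset.mpr e.prop
    refine ⟨fun e => (C e.val).get (hsome e), ?_⟩
    rintro e₁ e₂ hne ⟨v, hv1, hv2⟩ heq
    obtain ⟨u1, he1⟩ := Sym2.mem_iff_exists.mp hv1
    obtain ⟨u2, he2⟩ := Sym2.mem_iff_exists.mp hv2
    have hu12 : u1 ≠ u2 := by
      intro h
      exact hne (Subtype.ext (by rw [he1, he2, h]))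
    have hc1 : C s(v,u1) = some ((C e₁.val).get (hsome e₁)) := by
      rw [← he1]; exact (Option.some_get _).symm
    have heq' : (C e₁.val).get (hsome e₁) = (C e₂.val).get (hsome e₂) := heq
    have hc2 : C s(v,u2) = some ((C e₁.val).get (hsome e₁)) := by
      rw [← he2, heq']; exact (Option.some_get _).symm
    exact hCp hu12 _ hc1 hc2
  · -- lower bound : any proper edge coloring needs at least Δ colors
    intro k c hproper
    apply SimpleGraph.maxDegree_le_of_forall_degree_le
    intro v
    have h1 : G.incidenceFinset v =
        (Finset.univ.filter fun e : G.edgeSet => v ∈ e.val).image Subtype.val := by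
      ext e
      simp only [SimpleGraph.mem_incidenceFinset, Finset.mem_image, Finset.mem_filter,
        Finset.mem_univ, true_and]
      constructor
      · intro h
        exact ⟨⟨e, h.1⟩, h.2, rfl⟩
      · rintro ⟨⟨e', he'⟩, hv, rfl⟩
        exact ⟨he', hv⟩
    have h2 : G.degree v ≤ (Finset.univ.filter fun e : G.edgeSet => v ∈ e.val).card := by
      rw [← SimpleGraph.card_incidenceFinset_eq_degree, h1]
      exact le_of_eq (Finset.card_image_of_injective _ Subtype.val_injective)
    have h3 : (Finset.univ.filter fun e : G.edgeSet => v ∈ e.val).card ≤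
        (Finset.univ : Finset (Fin k)).card := by
      apply Finset.card_le_card_of_injOn c
      · intro a _; exact Finset.mem_univ _
      · intro a ha b hb hab
        simp only [Finset.coe_filter, Set.mem_setOf_eq, Finset.mem_univ,
          true_and] at ha hb
        by_contra hne
        exact hproper a b hne ⟨v, ha, hb⟩ hab
    simp only [Finset.card_univ, Fintype.card_fin] at h3
    omega
end
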